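/- Let C = ⋀_{i∈I} αᵢ be a conjunction of linear constraints and let (B, C) ↦ (B', C') be an elimination step of type (RED) or (AGP). If m : B → ℕ satisfies E ∧ C, then the valuation m' : B' → ℕ defined by restriction (for RED, dropping p; for AGP, setting m'(a) = Σ_{x∈X} m(x) and restricting elsewhere) satisfies m ≡_E m' and m' ⊨ E ∧ C'. (Completeness of (RED) and (AGP): C ⇛_E C'.) -/
import Mathlib


/-- Satisfaction of one normalized linear literal `(α, b)`. -/
def litSat {Var : Type*} [Fintype Var] (m : Var → ℕ) (L : (Var → ℤ) × ℤ) : Prop :=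
  ∑ v, L.1 v * (m v : ℤ) + L.2 ≥ 0

/-- Satisfaction of a cube (conjunction of literals). -/
def cubeSat {Var ι : Type*} [Fintype Var] (C : ι → (Var → ℤ) × ℤ) (m : Var → ℕ) : Prop :=
  ∀ i, litSat m (C i)

/-- Completeness of the (RED) and (AGP) elimination steps: if `m : B → ℕ`
satisfies `E ∧ C`, then its restriction `m'` to `B'` satisfies `m ≡_E m'` and
`m' ⊨ E ∧ C'`. -/
theorem stmt_16 {Var ι : Type*} [Fintype Var] [DecidableEq Var]
    (satE : (Var → ℕ) → Prop)
    (B B' : Finset Var)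
    (C C' : ι → (Var → ℤ) × ℤ)
    (hfv : ∀ i v, v ∉ B → (C i).1 v = 0)
    (hstep :
      -- (RED)
      (∃ (X : Finset Var) (p : Var), p ∈ B ∧ p ∉ X ∧ (↑X : Set Var) ⊆ ↑B' ∧
        B' = B.erase p ∧
        (∀ mm, satE mm → (mm p : ℤ) = ∑ x ∈ X, (mm x : ℤ)) ∧
        (∀ i, (C' i).2 = (C i).2 ∧ ∀ v,
          (C' i).1 v =
            if v = p then 0
            else if v ∈ X then (C i).1 v + (C i).1 p
            else (C i).1 v))
      ∨
      -- (AGP)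
      (∃ (X : Finset Var) (a xj : Var), a ∈ B ∧ a ∉ X ∧ (↑X : Set Var) ⊆ ↑B ∧
        xj ∈ X ∧ B' = B \ X ∧
        (∀ i, ∀ x ∈ X, (C i).1 x ≤ (C i).1 xj) ∧
        (∀ mm, satE mm → (mm a : ℤ) = ∑ x ∈ X, (mm x : ℤ)) ∧
        (∀ i, (C' i).2 = (C i).2 ∧ ∀ v,
          (C' i).1 v =
            if v = a then (C i).1 a + (C i).1 xj
            else if v ∈ X then 0
            else (C i).1 v)))
    (m : Var → ℕ)
    (hC : cubeSat C m)
    (hE : ∃ mm, satE mm ∧ ∀ v ∈ B, mm v = m v) :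
    ∃ m' : Var → ℕ,
      (∀ v ∈ B', m' v = m v) ∧
      (∃ mm, satE mm ∧ (∀ v ∈ B, mm v = m v) ∧ (∀ v ∈ B', mm v = m' v)) ∧
      cubeSat C' m' := by
  obtain ⟨mm, hsat, hmm⟩ := hE
  rcases hstep with ⟨X, p, hpB, hpX, hXB', hB', hEeq, hC'⟩ |
    ⟨X, a, xj, haB, haX, hXB, hxjX, hB', hle, hEeq, hC'⟩
  · -- RED
    have hB'B : ∀ v ∈ B', v ∈ B := by
      intro v hv; rw [hB'] at hv; exact Finset.mem_of_mem_erase hv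
    have key : (m p : ℤ) = ∑ x ∈ X, (m x : ℤ) := by
      have h := hEeq mm hsat
      rw [hmm p hpB] at h
      rw [h]
      refine Finset.sum_congr rfl fun x hx => ?_
      rw [hmm x (hB'B x (hXB' hx))]
    refine ⟨m, fun v _ => rfl, ⟨mm, hsat, hmm, fun v hv => hmm v (hB'B v hv)⟩, ?_⟩
    intro i
    have hb := (hC' i).1
    have hc := (hC' i).2
    have hsum : ∑ v, (C' i).1 v * (m v : ℤ) = ∑ v, (C i).1 v * (m v : ℤ) := by
      have step : ∀ v, (C' i).1 v * (m v : ℤ)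
          = (C i).1 v * m v +
            (if v ∈ insert p X then (if v = p then -((C i).1 p) else (C i).1 p) * (m v : ℤ)
             else 0) := by
        intro v
        rw [hc v]
        by_cases h1 : v = p
        · subst h1; simp [hpX]
        · by_cases h2 : v ∈ X
          · simp [h1, h2]; ring
          · simp [h1, h2]
      rw [Finset.sum_congr rfl (fun v _ => step v), Finset.sum_add_distrib]
      have hz : (∑ v, if v ∈ insert p X then
          (if v = p then -((C i).1 p) else (C i).1 p) * (m v : ℤ) else 0) = 0 := by
        rw [Finset.sum_ite_mem, Finset.univ_inter, Finset.sum_insert hpX]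
        have hX : ∑ x ∈ X, (if x = p then -((C i).1 p) else (C i).1 p) * (m x : ℤ)
            = (C i).1 p * ∑ x ∈ X, (m x : ℤ) := by
          rw [Finset.mul_sum]
          refine Finset.sum_congr rfl fun x hx => ?_
          have hxp : x ≠ p := fun h => hpX (h ▸ hx)
          simp [hxp]
        rw [hX, ← key]; simp
      rw [hz, add_zero]
    have := hC i
    unfold litSat cubeSat at *
    rw [hsum, hb]
    exact this
  · -- AGP
    have hB'B : ∀ v ∈ B', v ∈ B := by
      intro v hv; rw [hB'] at hv; exact (Finset.mem_sdiff.mp hv).1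
    have key : (m a : ℤ) = ∑ x ∈ X, (m x : ℤ) := by
      have h := hEeq mm hsat
      rw [hmm a haB] at h
      rw [h]
      refine Finset.sum_congr rfl fun x hx => ?_
      rw [hmm x (hXB hx)]
    refine ⟨m, fun v _ => rfl, ⟨mm, hsat, hmm, fun v hv => hmm v (hB'B v hv)⟩, ?_⟩
    intro i
    have hb := (hC' i).1
    have hc := (hC' i).2
    have hsum : ∑ v, (C' i).1 v * (m v : ℤ) ≥ ∑ v, (C i).1 v * (m v : ℤ) := by
      have step : ∀ v, (C' i).1 v * (m v : ℤ)
          = (C i).1 v * m v +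
            (if v ∈ insert a X then (if v = a then (C i).1 xj else -((C i).1 v)) * (m v : ℤ)
             else 0) := by
        intro v
        rw [hc v]
        by_cases h1 : v = a
        · subst h1; simp [haX, add_mul]
        · by_cases h2 : v ∈ X
          · simp [h1, h2]
          · simp [h1, h2]
      rw [Finset.sum_congr rfl (fun v _ => step v), Finset.sum_add_distrib]
      have hz : (∑ v, if v ∈ insert a X then
          (if v = a then (C i).1 xj else -((C i).1 v)) * (m v : ℤ) else 0) ≥ 0 := by
        rw [Finset.sum_ite_mem, Finset.univ_inter, Finset.sum_insert haX, if_pos rfl]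
        have hX : ∑ x ∈ X, (if x = a then (C i).1 xj else -((C i).1 x)) * (m x : ℤ)
            = -∑ x ∈ X, (C i).1 x * (m x : ℤ) := by
          rw [← Finset.sum_neg_distrib]
          refine Finset.sum_congr rfl fun x hx => ?_
          have hxa : x ≠ a := fun h => haX (h ▸ hx)
          simp [hxa]
        rw [hX, key, Finset.mul_sum]
        have : ∑ x ∈ X, (C i).1 x * (m x : ℤ) ≤ ∑ x ∈ X, (C i).1 xj * (m x : ℤ) :=
          Finset.sum_le_sum fun x hx =>
            mul_le_mul_of_nonneg_right (hle i x hx) (by positivity)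
        linarith
      linarith
    have := hC i
    unfold litSat cubeSat at *
    rw [hb]
    linarith
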